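/- Let σ be an involutive automorphism of the Lie algebra L satisfying σ(Z) = −Z, and let L^σ = {v ∈ L : σ(v) = v} be its fixed-point subalgebra. Then for every X ∈ p₊ one has the sum decomposition L = L^σ + k + Z_L(X) (sum of vector subspaces). -/

import Mathlib

/-- If `σ` is an involutive automorphism of `L` with `σ(Z) = −Z`,
and `L^σ` is its fixed-point subalgebra, then for every `X ∈ p₊` one has the
sum decomposition `L = L^σ + k + Z_L(X)` (sum of vector subspaces). -/
theorem stmt_4 {L : Type*} [LieRing L] [LieAlgebra ℂ L]
    [Module.Finite ℂ L] [LieAlgebra.IsSemisimple ℂ L] (Z : L)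
    (k pPlus pMinus : Submodule ℂ L)
    (hk : k = Module.End.eigenspace (LieAlgebra.ad ℂ L Z) 0)
    (hpPlus : pPlus = Module.End.eigenspace (LieAlgebra.ad ℂ L Z) Complex.I)
    (hpMinus : pMinus = Module.End.eigenspace (LieAlgebra.ad ℂ L Z) (-Complex.I))
    (hspan : k ⊔ pPlus ⊔ pMinus = ⊤)
    (σ : L →ₗ⁅ℂ⁆ L) (hinv : ∀ v : L, σ (σ v) = v) (hZ : σ Z = -Z) :
    ∀ X ∈ pPlus, ∀ v : L,
      ∃ a b c : L, σ a = a ∧ b ∈ k ∧ ⁅X, c⁆ = 0 ∧ v = a + b + c := by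
  intro X hX v
  set f := LieAlgebra.ad ℂ L Z with hf
  -- the eigenspace for 2i is trivial
  have h2I : Module.End.eigenspace f (2 * Complex.I) = ⊥ := by
    have hindep := Module.End.eigenspaces_iSupIndep f
    have hdisj := (iSupIndep_def.mp hindep) (2 * Complex.I)
    have hle : k ⊔ pPlus ⊔ pMinus ≤ ⨆ (j) (_ : j ≠ 2 * Complex.I),
        Module.End.eigenspace f j := by
      apply sup_le (sup_le ?_ ?_) ?_
      · rw [hk]
        exact le_iSup_of_le 0 (le_iSup_of_le (by simp [Complex.I_ne_zero]) le_rfl)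
      · rw [hpPlus]
        refine le_iSup_of_le Complex.I (le_iSup_of_le ?_ le_rfl)
        intro h
        exact Complex.I_ne_zero (by linear_combination -h)
      · rw [hpMinus]
        refine le_iSup_of_le (-Complex.I) (le_iSup_of_le ?_ le_rfl)
        intro h
        exact Complex.I_ne_zero (by linear_combination -h/3)
    rw [hspan] at hle
    rw [← le_bot_iff]
    have := hdisj.mono_right hle
    simpa using this.le_bot
  -- key: X commutes with everything in pPlus
  have key : ∀ w ∈ pPlus, ⁅X, w⁆ = 0 := by
    intro w hw
    have h1 : ⁅Z, X⁆ = Complex.I • X := by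
      rw [hpPlus, Module.End.mem_eigenspace_iff] at hX; exact hX
    have h2 : ⁅Z, w⁆ = Complex.I • w := by
      rw [hpPlus, Module.End.mem_eigenspace_iff] at hw; exact hw
    have hm : ⁅X, w⁆ ∈ Module.End.eigenspace f (2 * Complex.I) := by
      rw [Module.End.mem_eigenspace_iff]
      show ⁅Z, ⁅X, w⁆⁆ = (2 * Complex.I) • ⁅X, w⁆
      rw [leibniz_lie, h1, h2, smul_lie, lie_smul, two_mul, add_smul]
    rw [h2I] at hm
    simpa using hm
  -- σ maps pMinus into pPlus
  have hσmap : ∀ w ∈ pMinus, σ w ∈ pPlus := by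
    intro w hw
    rw [hpMinus, Module.End.mem_eigenspace_iff] at hw
    have hw' : ⁅Z, w⁆ = -Complex.I • w := hw
    rw [hpPlus, Module.End.mem_eigenspace_iff]
    show ⁅Z, σ w⁆ = Complex.I • σ w
    have h1 : σ ⁅Z, w⁆ = ⁅σ Z, σ w⁆ := by rw [LieHom.map_lie]
    rw [hw', map_smul, hZ, neg_lie] at h1
    have := h1.symm
    rw [neg_eq_iff_eq_neg] at this
    rw [this, neg_smul, neg_neg]
  -- decompose v
  have hv : v ∈ k ⊔ pPlus ⊔ pMinus := hspan ▸ Submodule.mem_top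
  obtain ⟨u, hu, w, hw, rfl⟩ := Submodule.mem_sup.mp hv
  obtain ⟨b, hb, x, hx, rfl⟩ := Submodule.mem_sup.mp hu
  refine ⟨w + σ w, b, x - σ w, ?_, hb, ?_, ?_⟩
  · rw [map_add σ, hinv, add_comm]
  · rw [lie_sub, key x hx, key (σ w) (hσmap w hw), sub_zero]
  · abel
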